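/- If −1/2 < b < 0, 0 < t < 1 + 2b, and x ∈ (0,1) satisfies t·artanh(x) − x = 2b·x (equivalently t·artanh(x) = (1+2b)·x), then x > √(1 − t/(1+2b)). -/

import Mathlib

/-- The inverse hyperbolic tangent, artanh(x) = (1/2)·log((1+x)/(1−x)). -/
noncomputable def artanh (x : ℝ) : ℝ := (1 / 2) * Real.log ((1 + x) / (1 - x))

lemma two_log_lt (y : ℝ) (hy : 1 < y) : 2 * Real.log y < y - 1 / y := by
  set f : ℝ → ℝ := fun z => z - z⁻¹ - 2 * Real.log z with hf
  have hmono : StrictMonoOn f (Set.Ici 1) := by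
    apply strictMonoOn_of_deriv_pos (convex_Ici 1)
    · apply ContinuousOn.sub
      · exact (continuous_id.continuousOn).sub (continuousOn_inv₀.mono (by
          intro z hz; simp at hz ⊢; linarith))
      · exact (continuousOn_const.mul (Real.continuousOn_log.mono (by
          intro z hz; simp at hz ⊢; linarith)))
    · intro z hz
      rw [interior_Ici] at hz
      have hz1 : (1:ℝ) < z := hz
      have hz0 : z ≠ 0 := by linarith
      have hd : HasDerivAt f (1 - (-(z^2)⁻¹) - 2 * z⁻¹) z := by
        exact ((hasDerivAt_id z).sub (hasDerivAt_inv hz0)).sub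
          ((Real.hasDerivAt_log hz0).const_mul 2)
      rw [hd.deriv]
      have h2 : 1 - (-(z^2)⁻¹) - 2 * z⁻¹ = (1 - z⁻¹)^2 := by
        field_simp; ring
      rw [h2]
      have : z⁻¹ < 1 := by
        rw [inv_lt_one_iff₀]; right; exact hz1
      have hz2 : 0 < 1 - z⁻¹ := by linarith
      positivity
  have h := hmono (Set.self_mem_Ici) (le_of_lt hy) hy
  simp only [hf] at h
  have h1 : (1:ℝ) - 1⁻¹ - 2 * Real.log 1 = 0 := by norm_num
  rw [h1] at h
  have : (1:ℝ)/y = y⁻¹ := one_div y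
  linarith [h]

lemma artanh_lt (x : ℝ) (h0 : 0 < x) (h1 : x < 1) : artanh x < x / (1 - x^2) := by
  have hy1 : 1 < (1 + x) / (1 - x) := by
    rw [lt_div_iff₀ (by linarith)]; linarith
  have key := two_log_lt _ hy1
  unfold artanh
  have h1x : (1:ℝ) - x ≠ 0 := by linarith
  have h1x' : (1:ℝ) + x ≠ 0 := by linarith
  have hsq : (1:ℝ) - x^2 ≠ 0 := by nlinarith
  have hval : (1 + x) / (1 - x) - 1 / ((1 + x) / (1 - x)) = 4 * x / (1 - x^2) := by
    field_simp
    ring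
  rw [hval] at key
  have h4 : 4 * x / (1 - x^2) = 4 * (x / (1 - x^2)) := by ring
  linarith

theorem solution_lower_bound_b (b t x : ℝ) (hb1 : -1/2 < b) (hb2 : b < 0)
    (ht : 0 < t) (ht1 : t < 1 + 2 * b)
    (hx : x ∈ Set.Ioo (0 : ℝ) 1) (heq : t * artanh x - x = 2 * b * x) :
    Real.sqrt (1 - t / (1 + 2 * b)) < x := by
  obtain ⟨hx0, hx1⟩ := hx
  have hc : 0 < 1 + 2 * b := by linarith
  have hat := artanh_lt x hx0 hx1
  have heq' : t * artanh x = (1 + 2 * b) * x := by linarith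
  have hsq : 0 < 1 - x^2 := by nlinarith
  -- from heq', (1+2b)*x < t * x / (1-x^2)
  have h2 : (1 + 2 * b) * x < t * (x / (1 - x^2)) := by
    rw [← heq']
    exact (mul_lt_mul_iff_right₀ ht).2 hat
  -- so (1+2b)*(1-x^2) < t
  have h3 : (1 + 2 * b) * (1 - x^2) < t := by
    rw [div_eq_mul_inv] at h2
    have hthis : 1 + 2 * b < t * (1 - x^2)⁻¹ := by
      have := (mul_lt_mul_iff_left₀ hx0).1 (by nlinarith : (1 + 2*b)*x < (t * (1 - x^2)⁻¹) * x)
      linarith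
    have he : t * (1 - x^2)⁻¹ * (1 - x^2) = t := by field_simp
    nlinarith [mul_lt_mul_of_pos_right hthis hsq]
  have h4 : 1 - x^2 < t / (1 + 2 * b) := (lt_div_iff₀ hc).2 (by nlinarith)
  rw [Real.sqrt_lt' hx0]
  linarith
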